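/- Under the setting of the generic game bound — f : ℝ^d → ℝ convex lower semicontinuous and L-smooth with respect to ‖·‖, 𝒳 compact convex, x* a minimizer of f over 𝒳, y_t = ∇f(x̃_t) (Optimistic-FTL) and x_t produced by Mirror Descent x_t = argmin_{x ∈ 𝒳}[γ_t⟨x, α_t y_t⟩ + V_{x_{t−1}}(x)] with V the Bregman divergence of a differentiable 1-strongly convex φ, and V_{x_t}(x*) ≤ D for all t — choose the weights α_t = t and any non-increasing learning rates γ_t with 1/(C L) ≤ γ_t ≤ 1/(4L) for some constant C > 4. Then f(x̄_T) − min_{x ∈ 𝒳} f(x) ≤ 2 C L D / T², where x̄_T = (1/A_T) Σ_{t=1}^T α_t x_t and A_T = T(T+1)/2. -/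

import Mathlib

open scoped RealInnerProductSpace
open Finset

/-- The dual norm of a norm `N` on ℝ^d: `‖y‖_* = sup {⟪x, y⟫ : N x ≤ 1}`. -/
noncomputable def dualNorm {d : ℕ} (N : EuclideanSpace ℝ (Fin d) → ℝ)
    (y : EuclideanSpace ℝ (Fin d)) : ℝ :=
  sSup ((fun x => ⟪x, y⟫) '' {x | N x ≤ 1})

open Filter


lemma myDeriv_nonneg_of_min (g : ℝ → ℝ) (g' : ℝ) (hg : HasDerivAt g g' 0)
    (h : ∀ s : ℝ, 0 < s → s ≤ 1 → g 0 ≤ g s) : 0 ≤ g' := by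
  have ht : Tendsto (slope g 0) (nhdsWithin 0 (Set.Ioi 0)) (nhds g') :=
    (hasDerivAt_iff_tendsto_slope.1 hg).mono_left
      (nhdsWithin_mono 0 (fun s hs => ne_of_gt hs))
  refine ge_of_tendsto ht ?_
  filter_upwards [Ioc_mem_nhdsGT_of_mem (by norm_num : (0:ℝ) ∈ Set.Ico 0 1)] with s hs
  have h1 := h s hs.1 hs.2
  have hse : slope g 0 s = (g s - g 0) / s := by rw [slope_def_field]; simp
  rw [hse]
  apply div_nonneg (by linarith) (le_of_lt hs.1)

lemma myLineDeriv {d : ℕ} (f : EuclideanSpace ℝ (Fin d) → ℝ) (hdiff : Differentiable ℝ f)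
    (u w : EuclideanSpace ℝ (Fin d)) (s₀ : ℝ) :
    HasDerivAt (fun s : ℝ => f (u + s • w)) ⟪gradient f (u + s₀ • w), w⟫ s₀ := by
  have hc : HasDerivAt (fun s : ℝ => u + s • w) w s₀ := by
    simpa using ((hasDerivAt_id s₀).smul_const w).const_add u
  have := ((hdiff (u + s₀ • w)).hasGradientAt.hasFDerivAt).comp_hasDerivAt s₀ hc
  simpa [InnerProductSpace.toDual_apply_apply, Function.comp_def] using this

lemma myConvexGrad {d : ℕ} (f : EuclideanSpace ℝ (Fin d) → ℝ)
    (hconv : ConvexOn ℝ Set.univ f) (hdiff : Differentiable ℝ f)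
    (u v : EuclideanSpace ℝ (Fin d)) :
    f u + ⟪gradient f u, v - u⟫ ≤ f v := by
  set w := v - u with hw
  have hD : HasDerivAt (fun s : ℝ => (f v - f u) * s - f (u + s • w) + f u)
      ((f v - f u) - ⟪gradient f u, w⟫) 0 := by
    have h1 : HasDerivAt (fun s : ℝ => (f v - f u) * s) (f v - f u) 0 := by
      simpa using (hasDerivAt_id (0:ℝ)).const_mul (f v - f u)
    have h2 := myLineDeriv f hdiff u w 0
    rw [show u + (0:ℝ) • w = u by simp] at h2
    simpa using (h1.sub h2).add_const (f u)
  have h0 : (fun s : ℝ => (f v - f u) * s - f (u + s • w) + f u) 0 = 0 := by simp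
  have key : 0 ≤ (f v - f u) - ⟪gradient f u, w⟫ := by
    apply myDeriv_nonneg_of_min _ _ hD
    intro s hs0 hs1
    have hc := hconv.2 (Set.mem_univ u) (Set.mem_univ v) (by linarith : (0:ℝ) ≤ 1 - s)
      hs0.le (by ring)
    have heq : (1 - s) • u + s • v = u + s • w := by rw [hw]; module
    rw [heq] at hc; simp only [smul_eq_mul] at hc
    simp only [zero_smul, add_zero, mul_zero]
    nlinarith [hc]
  linarith

section
variable {d : ℕ} {N : EuclideanSpace ℝ (Fin d) → ℝ}
  (hN_add : ∀ u v, N (u + v) ≤ N u + N v)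
  (hN_smul : ∀ (a : ℝ) (u : EuclideanSpace ℝ (Fin d)), N (a • u) = |a| * N u)
  (hN_zero : ∀ u, N u = 0 → u = 0)

include hN_smul in
lemma myN_zero : N 0 = 0 := by
  have := hN_smul 0 0; simpa using this

include hN_add hN_smul in
lemma myN_nonneg (u : EuclideanSpace ℝ (Fin d)) : 0 ≤ N u := by
  have h1 : N (u + (-u)) ≤ N u + N (-u) := hN_add u (-u)
  have h2 : N (-u) = N u := by
    have := hN_smul (-1) u; simpa using this
  have h0 : N 0 = 0 := myN_zero hN_smul
  simp only [add_neg_cancel, h0, h2] at h1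
  linarith

include hN_add hN_smul in
lemma myN_upper : ∃ K : ℝ, 0 ≤ K ∧ ∀ u, N u ≤ K * ‖u‖ := by
  refine ⟨∑ i : Fin d, N (EuclideanSpace.single i (1:ℝ)),
    Finset.sum_nonneg fun i _ => myN_nonneg hN_add hN_smul _, fun u => ?_⟩
  have hx : u = ∑ i : Fin d, u i • EuclideanSpace.single i (1:ℝ) := by
    ext j
    rw [WithLp.ofLp_sum, Finset.sum_apply]
    simp [EuclideanSpace.single_apply]
  calc N u = N (∑ i : Fin d, u i • EuclideanSpace.single i (1:ℝ)) := by rw [← hx]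
    _ ≤ ∑ i : Fin d, N (u i • EuclideanSpace.single i (1:ℝ)) :=
        Finset.le_sum_of_subadditive N (myN_zero hN_smul).le hN_add _ _
    _ ≤ ∑ i : Fin d, ‖u‖ * N (EuclideanSpace.single i (1:ℝ)) := by
        refine Finset.sum_le_sum fun i _ => ?_
        rw [hN_smul]
        gcongr
        · exact myN_nonneg hN_add hN_smul _
        · rw [EuclideanSpace.norm_eq, ← Real.sqrt_sq_eq_abs (u i)]
          apply Real.sqrt_le_sqrt
          have := Finset.single_le_sum (f := fun k => ‖u k‖ ^ 2)
            (fun k _ => by positivity) (Finset.mem_univ i)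
          simpa [sq_abs] using this
    _ = (∑ i : Fin d, N (EuclideanSpace.single i (1:ℝ))) * ‖u‖ := by
        rw [Finset.sum_mul]; simp [mul_comm]

include hN_add hN_smul hN_zero in
lemma myN_lower : ∃ m : ℝ, 0 < m ∧ ∀ u, m * ‖u‖ ≤ N u := by
  rcases Nat.eq_zero_or_pos d with hd | hd
  · refine ⟨1, one_pos, fun u => ?_⟩
    have : u = 0 := by subst hd; ext j; exact absurd j.2 (by omega)
    simp [this, myN_zero hN_smul]
  · -- N is continuous
    obtain ⟨K, hK0, hK⟩ := myN_upper hN_add hN_smul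
    have hlip : LipschitzWith (Real.toNNReal K) N := by
      apply LipschitzWith.of_dist_le_mul
      intro a b
      rw [Real.dist_eq, dist_eq_norm]
      have h1 : N a - N b ≤ N (a - b) := by
        have := hN_add (a - b) b; simp at this; linarith
      have h2 : N b - N a ≤ N (a - b) := by
        have ht := hN_add (a - b) (b - a + b)
        have hs : N (b - a) = N (a - b) := by
          have h5 := hN_smul (-1) (a - b)
          simp only [neg_smul, one_smul, abs_neg, abs_one, one_mul, neg_sub] at h5
          exact h5
        have ht2 := hN_add (b - a) b
        have he : b - a + a = b := by abel
        have ht3 := hN_add (b - a) a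
        rw [he, hs] at ht3
        linarith
      have h3 : |N a - N b| ≤ N (a - b) := abs_sub_le_iff.2 ⟨h1, h2⟩
      calc |N a - N b| ≤ N (a - b) := h3
        _ ≤ K * ‖a - b‖ := hK _
        _ ≤ Real.toNNReal K * ‖a - b‖ := by
            gcongr; exact (Real.coe_toNNReal K hK0).ge
    have hcont : Continuous N := hlip.continuous
    haveI : Nontrivial (EuclideanSpace ℝ (Fin d)) :=
      nontrivial_of_ne (EuclideanSpace.single ⟨0, hd⟩ (1:ℝ)) 0 (by
        intro h
        have := congrArg (fun v => v ⟨0, hd⟩) h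
        simp [EuclideanSpace.single_apply] at this)
    have hsph : (Metric.sphere (0 : EuclideanSpace ℝ (Fin d)) 1).Nonempty := by
      apply NormedSpace.sphere_nonempty.2
      norm_num
    obtain ⟨z, hz, hzmin⟩ := (isCompact_sphere (0 : EuclideanSpace ℝ (Fin d)) 1).exists_isMinOn
      hsph hcont.continuousOn
    have hz1 : ‖z‖ = 1 := by simpa using hz
    have hzne : z ≠ 0 := by intro h; rw [h] at hz1; simp at hz1
    have hNz : 0 < N z := by
      rcases lt_or_eq_of_le (myN_nonneg hN_add hN_smul z) with h | h
      · exact h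
      · exact absurd (hN_zero z h.symm) hzne
    refine ⟨N z, hNz, fun u => ?_⟩
    rcases eq_or_ne u 0 with rfl | hu
    · simp [myN_zero hN_smul]
    · have hnu : (0:ℝ) < ‖u‖ := norm_pos_iff.2 hu
      have hmem : ‖u‖⁻¹ • u ∈ Metric.sphere (0 : EuclideanSpace ℝ (Fin d)) 1 := by
        simp [norm_smul, abs_of_pos (inv_pos.2 hnu), inv_mul_cancel₀ hnu.ne']
      have := hzmin hmem
      have hNs : N (‖u‖⁻¹ • u) = ‖u‖⁻¹ * N u := by
        rw [hN_smul]; rw [abs_of_pos (inv_pos.2 hnu)]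
      simp only [IsMinOn, Set.mem_setOf_eq] at this
      rw [hNs] at this
      have : N z ≤ ‖u‖⁻¹ * N u := this
      calc N z * ‖u‖ ≤ (‖u‖⁻¹ * N u) * ‖u‖ := by gcongr
        _ = N u := by field_simp

include hN_add hN_smul hN_zero in
lemma myPairing (w z : EuclideanSpace ℝ (Fin d)) : ⟪z, w⟫ ≤ N w * dualNorm N z := by
  obtain ⟨m, hm, hml⟩ := myN_lower hN_add hN_smul hN_zero
  have hbdd : BddAbove ((fun x => ⟪x, z⟫) '' {x | N x ≤ 1}) := by
    refine ⟨m⁻¹ * ‖z‖, fun v hv => ?_⟩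
    obtain ⟨p, hp, rfl⟩ := hv
    have h1 : m * ‖p‖ ≤ 1 := le_trans (hml p) hp
    have h2 : ‖p‖ ≤ m⁻¹ := by
      have := (le_div_iff₀' hm).mpr h1
      simpa [one_div] using this
    calc ⟪p, z⟫ ≤ ‖p‖ * ‖z‖ := real_inner_le_norm p z
      _ ≤ m⁻¹ * ‖z‖ := by gcongr
  rcases eq_or_lt_of_le (myN_nonneg hN_add hN_smul w) with h0 | hpos
  · have hw : w = 0 := hN_zero w h0.symm
    simp [hw, myN_zero hN_smul]
  · have hmem : ((N w)⁻¹ • w) ∈ {x | N x ≤ 1} := by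
      simp only [Set.mem_setOf_eq, hN_smul, abs_of_pos (inv_pos.2 hpos)]
      rw [inv_mul_cancel₀ hpos.ne']
    have hle : ⟪(N w)⁻¹ • w, z⟫ ≤ dualNorm N z := le_csSup hbdd ⟨_, hmem, rfl⟩
    rw [real_inner_smul_left] at hle
    rw [real_inner_comm]
    calc ⟪w, z⟫ = N w * ((N w)⁻¹ * ⟪w, z⟫) := by field_simp
      _ ≤ N w * dualNorm N z := mul_le_mul_of_nonneg_left hle hpos.le
end

section
variable {d : ℕ} {N : EuclideanSpace ℝ (Fin d) → ℝ}
  (hN_add : ∀ u v, N (u + v) ≤ N u + N v)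
  (hN_smul : ∀ (a : ℝ) (u : EuclideanSpace ℝ (Fin d)), N (a • u) = |a| * N u)
  (hN_zero : ∀ u, N u = 0 → u = 0)

include hN_add hN_smul hN_zero in
lemma myDescent (f : EuclideanSpace ℝ (Fin d) → ℝ) (hdiff : Differentiable ℝ f)
    (L : ℝ) (hL : 0 < L)
    (hsmooth : ∀ u v, dualNorm N (gradient f u - gradient f v) ≤ L * N (u - v))
    (u v : EuclideanSpace ℝ (Fin d)) :
    f v ≤ f u + ⟪gradient f u, v - u⟫ + L / 2 * (N (v - u)) ^ 2 := by
  set w := v - u with hw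
  set h : ℝ → ℝ := fun s => f (u + s • w) - s * ⟪gradient f u, w⟫ - L * (N w) ^ 2 / 2 * s ^ 2
    with hh
  have hder : ∀ s : ℝ, HasDerivAt h
      (⟪gradient f (u + s • w), w⟫ - ⟪gradient f u, w⟫ - L * (N w) ^ 2 * s) s := by
    intro s
    have h1 := myLineDeriv f hdiff u w s
    have h2 : HasDerivAt (fun s : ℝ => s * ⟪gradient f u, w⟫) ⟪gradient f u, w⟫ s := by
      simpa using (hasDerivAt_id s).mul_const ⟪gradient f u, w⟫
    have h3 : HasDerivAt (fun s : ℝ => L * (N w) ^ 2 / 2 * s ^ 2) (L * (N w) ^ 2 * s) s := by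
      have := (hasDerivAt_pow 2 s).const_mul (L * (N w) ^ 2 / 2)
      simpa using this.congr_deriv (by ring)
    exact (h1.sub h2).sub h3
  have hanti : AntitoneOn h (Set.Icc 0 1) := by
    apply antitoneOn_of_deriv_nonpos (convex_Icc 0 1)
    · exact (continuous_iff_continuousAt.2 fun s => (hder s).continuousAt).continuousOn
    · intro s _
      exact ((hder s).differentiableAt).differentiableWithinAt
    · intro s hs
      rw [interior_Icc] at hs
      rw [(hder s).deriv]
      have hpair : ⟪gradient f (u + s • w) - gradient f u, w⟫
          ≤ N w * dualNorm N (gradient f (u + s • w) - gradient f u) :=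
        myPairing hN_add hN_smul hN_zero w _
      have hsm := hsmooth (u + s • w) u
      rw [show u + s • w - u = s • w by abel] at hsm
      rw [hN_smul, abs_of_pos hs.1] at hsm
      have hNw : 0 ≤ N w := myN_nonneg hN_add hN_smul w
      have : ⟪gradient f (u + s • w) - gradient f u, w⟫ ≤ L * (N w)^2 * s := by
        calc ⟪gradient f (u + s • w) - gradient f u, w⟫
            ≤ N w * dualNorm N (gradient f (u + s • w) - gradient f u) := hpair
          _ ≤ N w * (L * (s * N w)) := by
              apply mul_le_mul_of_nonneg_left hsm hNw
          _ = L * (N w)^2 * s := by ring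
      rw [inner_sub_left] at this
      linarith
  have := hanti (Set.mem_Icc.2 ⟨le_refl 0, zero_le_one⟩) (Set.mem_Icc.2 ⟨zero_le_one, le_refl 1⟩)
    zero_le_one
  simp only [hh] at this
  rw [show u + (1:ℝ) • w = v by rw [hw]; module] at this
  simp only [zero_smul, add_zero, zero_mul, mul_zero] at this
  nlinarith [this]
end

lemma myMD {d : ℕ} (φ : EuclideanSpace ℝ (Fin d) → ℝ) (hφ : Differentiable ℝ φ)
    (V : EuclideanSpace ℝ (Fin d) → EuclideanSpace ℝ (Fin d) → ℝ)
    (hV : ∀ c x, V c x = φ x - ⟪gradient φ c, x - c⟫ - φ c)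
    (X : Set (EuclideanSpace ℝ (Fin d))) (hXconv : Convex ℝ X)
    (xt c w : EuclideanSpace ℝ (Fin d)) (hxt : xt ∈ X) (hw : w ∈ X)
    (η : ℝ) (yv : EuclideanSpace ℝ (Fin d))
    (hopt : ∀ w' ∈ X, η * ⟪xt, yv⟫ + V c xt ≤ η * ⟪w', yv⟫ + V c w') :
    η * ⟪yv, xt - w⟫ ≤ V c w - V xt w - V c xt := by
  set u := w - xt with hu
  set g : ℝ → ℝ := fun s => η * ⟪xt + s • u, yv⟫ + V c (xt + s • u) with hg
  have hgform : g = fun s => (η * ⟪xt, yv⟫ - ⟪gradient φ c, xt - c⟫ - φ c)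
      + s * (η * ⟪u, yv⟫ - ⟪gradient φ c, u⟫) + φ (xt + s • u) := by
    funext s
    rw [hg]
    simp only [hV]
    rw [show xt + s • u - c = (xt - c) + s • u by abel]
    rw [inner_add_left, real_inner_smul_left, inner_add_right, real_inner_smul_right]
    ring
  have hder : HasDerivAt g ((η * ⟪u, yv⟫ - ⟪gradient φ c, u⟫) + ⟪gradient φ xt, u⟫) 0 := by
    rw [hgform]
    have h1 : HasDerivAt (fun s : ℝ => (η * ⟪xt, yv⟫ - ⟪gradient φ c, xt - c⟫ - φ c)
        + s * (η * ⟪u, yv⟫ - ⟪gradient φ c, u⟫)) (η * ⟪u, yv⟫ - ⟪gradient φ c, u⟫) 0 := by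
      simpa using ((hasDerivAt_id (0:ℝ)).mul_const (η * ⟪u, yv⟫ - ⟪gradient φ c, u⟫)).const_add (η * ⟪xt, yv⟫ - ⟪gradient φ c, xt - c⟫ - φ c)
    have h2 := myLineDeriv φ hφ xt u 0
    rw [show xt + (0:ℝ) • u = xt by simp] at h2
    exact h1.add h2
  have hmin : 0 ≤ (η * ⟪u, yv⟫ - ⟪gradient φ c, u⟫) + ⟪gradient φ xt, u⟫ := by
    apply myDeriv_nonneg_of_min _ _ hder
    intro s hs0 hs1
    have hmem : xt + s • u ∈ X := by
      have := hXconv hxt hw (by linarith : (0:ℝ) ≤ 1 - s) hs0.le (by ring)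
      rw [show (1 - s) • xt + s • w = xt + s • u by rw [hu]; module] at this
      exact this
    have := hopt _ hmem
    rw [hg]
    simp only
    rw [show xt + (0:ℝ) • u = xt by simp]
    exact this
  -- three-point identity
  have h3pt : ⟪gradient φ xt, u⟫ - ⟪gradient φ c, u⟫ = V c w - V xt w - V c xt := by
    simp only [hV, hu]
    rw [show w - c = (w - xt) + (xt - c) by abel, inner_add_right]
    ring
  have hsym : ⟪yv, xt - w⟫ = - ⟪u, yv⟫ := by
    rw [hu, show xt - w = -(w - xt) by abel, inner_neg_right, real_inner_comm]
  rw [hsym]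
  linarith [hmin, h3pt]

set_option maxHeartbeats 4000000

/-- Corollary 1: with weights `α_t = t` and non-increasing learning rates
`1/(CL) ≤ γ_t ≤ 1/(4L)` (`C > 4`), the Fenchel-game dynamics (Optimistic-FTL vs. Mirror
Descent) give `f(x̄_T) - min_{x ∈ 𝒳} f(x) ≤ 2CLD/T²`. -/
theorem fenchel_game_accelerated_rate {d : ℕ}
    (f : EuclideanSpace ℝ (Fin d) → ℝ)
    (X : Set (EuclideanSpace ℝ (Fin d)))
    (hconv : ConvexOn ℝ Set.univ f)
    (hlsc : LowerSemicontinuous f)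
    (hXcomp : IsCompact X) (hXconv : Convex ℝ X)
    (N : EuclideanSpace ℝ (Fin d) → ℝ)
    -- N is a norm
    (hN_add : ∀ u v, N (u + v) ≤ N u + N v)
    (hN_smul : ∀ (a : ℝ) (u : EuclideanSpace ℝ (Fin d)), N (a • u) = |a| * N u)
    (hN_zero : ∀ u, N u = 0 → u = 0)
    -- f is L-smooth with respect to N
    (L : ℝ) (hL : 0 < L)
    (hdiff : Differentiable ℝ f)
    (hsmooth : ∀ u v, dualNorm N (gradient f u - gradient f v) ≤ L * N (u - v))
    -- x* minimizes f over X
    (xstar : EuclideanSpace ℝ (Fin d)) (hxstar : xstar ∈ X)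
    (hmin : ∀ w ∈ X, f xstar ≤ f w)
    (T : ℕ) (hT : 1 ≤ T)
    -- weights α_t = t
    (α : ℕ → ℝ) (hαdef : ∀ t, α t = (t : ℝ))
    (A : ℕ → ℝ) (hA : ∀ t, A t = ∑ s ∈ Icc 1 t, α s)
    -- learning rates: non-increasing, 1/(CL) ≤ γ_t ≤ 1/(4L) with C > 4
    (C : ℝ) (hC : 4 < C)
    (γ : ℕ → ℝ)
    (hγ : ∀ t ∈ Icc 1 T, 1 / (C * L) ≤ γ t ∧ γ t ≤ 1 / (4 * L))
    (hγmono : ∀ s ∈ Icc 1 T, ∀ t ∈ Icc 1 T, s ≤ t → γ t ≤ γ s)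
    -- φ is differentiable, 1-strongly convex w.r.t. N, with Bregman divergence V
    (φ : EuclideanSpace ℝ (Fin d) → ℝ) (hφ : Differentiable ℝ φ)
    (V : EuclideanSpace ℝ (Fin d) → EuclideanSpace ℝ (Fin d) → ℝ)
    (hV : ∀ c x, V c x = φ x - ⟪gradient φ c, x - c⟫ - φ c)
    (hφsc : ∀ c x, (1 / 2) * (N (x - c)) ^ 2 ≤ V c x)
    -- the game dynamics
    (x : ℕ → EuclideanSpace ℝ (Fin d)) (hx0 : x 0 ∈ X)
    (xtil : ℕ → EuclideanSpace ℝ (Fin d))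
    (hxtil : ∀ t, 1 ≤ t →
      xtil t = (A t)⁻¹ • (α t • x (t - 1) + ∑ s ∈ Icc 1 (t - 1), α s • x s))
    (y : ℕ → EuclideanSpace ℝ (Fin d))
    (hy : ∀ t, 1 ≤ t → y t = gradient f (xtil t))
    (hx : ∀ t ∈ Icc 1 T, x t ∈ X ∧ ∀ w ∈ X,
      γ t * (α t * ⟪x t, y t⟫) + V (x (t - 1)) (x t)
        ≤ γ t * (α t * ⟪w, y t⟫) + V (x (t - 1)) w)
    (D : ℝ) (hD : ∀ t ≤ T, V (x t) xstar ≤ D)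
    (xbar : EuclideanSpace ℝ (Fin d))
    (hxbar : xbar = (A T)⁻¹ • ∑ t ∈ Icc 1 T, α t • x t) :
    f xbar - f xstar ≤ 2 * C * L * D / (T : ℝ) ^ 2 := by
  have hC0 : (0:ℝ) < C := by linarith
  have hCL : (0:ℝ) < C * L := by positivity
  have hAval : ∀ m : ℕ, A m = (m : ℝ) * (m + 1) / 2 := by
    intro m
    rw [hA]
    induction m with
    | zero => simp
    | succ k ih =>
      rw [Finset.sum_Icc_succ_top (by omega : 1 ≤ k + 1), ih, hαdef]
      push_cast
      ring
  have hApos : ∀ m : ℕ, 1 ≤ m → 0 < A m := by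
    intro m hm
    rw [hAval]
    have h1 : (1:ℝ) ≤ (m:ℝ) := by exact_mod_cast hm
    nlinarith
  have hAnn : ∀ m : ℕ, 0 ≤ A m := by
    intro m
    rw [hAval]
    positivity
  have hαnn : ∀ m : ℕ, 0 ≤ α m := by intro m; rw [hαdef]; positivity
  have hγpos : ∀ t ∈ Icc 1 T, 0 < γ t := fun t ht =>
    lt_of_lt_of_le (by positivity) (hγ t ht).1
  have hγinv_le : ∀ t ∈ Icc 1 T, 1 / γ t ≤ C * L := by
    intro t ht
    have h1 := (hγ t ht).1
    have h2 := hγpos t ht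
    rw [div_le_iff₀ h2]
    calc (1:ℝ) = (C*L) * (1/(C*L)) := by field_simp
      _ ≤ C * L * γ t := by gcongr
  have hγinv_ge : ∀ t ∈ Icc 1 T, 4 * L ≤ 1 / γ t := by
    intro t ht
    have h2 := hγpos t ht
    rw [le_div_iff₀ h2]
    have h3 := (hγ t ht).2
    have h4 : 4 * L * (1/(4*L)) = 1 := by field_simp
    nlinarith [mul_le_mul_of_nonneg_left h3 (by positivity : (0:ℝ) ≤ 4*L)]
  set S : ℕ → EuclideanSpace ℝ (Fin d) := fun m => ∑ s ∈ Icc 1 m, α s • x s with hSdef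
  set xb : ℕ → EuclideanSpace ℝ (Fin d) := fun m => (A m)⁻¹ • S m with hxbdef
  set a : ℕ → ℝ := fun m => V (x m) xstar with hadef
  have hann : ∀ m, 0 ≤ a m := by
    intro m
    have h1 := hφsc (x m) xstar
    have h2 : 0 ≤ (1/2) * (N (xstar - x m))^2 := by positivity
    simp only [hadef]
    linarith
  have hSrec : ∀ n : ℕ, S (n+1) = S n + α (n+1) • x (n+1) := by
    intro n
    simp only [hSdef]
    rw [Finset.sum_Icc_succ_top (by omega : 1 ≤ n + 1)]
  have hSb : ∀ m : ℕ, A m • xb m = S m := by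
    intro m
    rcases Nat.eq_zero_or_pos m with rfl | hm
    · simp only [hxbdef, hSdef]
      simp [hAval]
    · simp only [hxbdef]
      rw [smul_smul, mul_inv_cancel₀ (hApos m hm).ne', one_smul]
  -- the per-step inequality
  have hstep : ∀ n : ℕ, n + 1 ≤ T →
      A (n+1) * (f (xb (n+1)) - f xstar) ≤ A n * (f (xb n) - f xstar)
        + (1 / γ (n+1)) * (a n - a (n+1)) := by
    intro n hn
    have htmem : n + 1 ∈ Icc 1 T := Finset.mem_Icc.2 ⟨by omega, hn⟩
    have hAtpos : 0 < A (n+1) := hApos (n+1) (by omega)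
    have hAtne : A (n+1) ≠ 0 := hAtpos.ne'
    have ht1 : (1:ℕ) ≤ n + 1 := by omega
    have hxt : xtil (n+1) = (A (n+1))⁻¹ • (α (n+1) • x n + S n) := by
      rw [hxtil (n+1) ht1]
      simp only [Nat.add_sub_cancel, hSdef]
    have hAxt : A (n+1) • xtil (n+1) = α (n+1) • x n + S n := by
      rw [hxt, smul_smul, mul_inv_cancel₀ hAtne, one_smul]
    have hkey : xb (n+1) - xtil (n+1) = (α (n+1) / A (n+1)) • (x (n+1) - x n) := by
      rw [hxt]
      simp only [hxbdef]
      rw [← smul_sub]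
      rw [show S (n+1) - (α (n+1) • x n + S n) = α (n+1) • (x (n+1) - x n) by
        rw [hSrec n]; module]
      rw [smul_smul, inv_mul_eq_div]
    have hαAnn : 0 ≤ α (n+1) / A (n+1) := div_nonneg (hαnn (n+1)) hAtpos.le
    have Nval : N (xb (n+1) - xtil (n+1)) = (α (n+1) / A (n+1)) * N (x (n+1) - x n) := by
      rw [hkey, hN_smul, abs_of_nonneg hαAnn]
    have e1 : ⟪y (n+1), xb (n+1) - xtil (n+1)⟫
        = (α (n+1) / A (n+1)) * ⟪y (n+1), x (n+1) - x n⟫ := by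
      rw [hkey, real_inner_smul_right]
    have hd := myDescent hN_add hN_smul hN_zero f hdiff L hL hsmooth (xtil (n+1)) (xb (n+1))
    rw [← hy (n+1) ht1] at hd
    rw [e1, Nval] at hd
    have I1 : A (n+1) * f (xb (n+1)) ≤ A (n+1) * f (xtil (n+1))
        + α (n+1) * ⟪y (n+1), x (n+1) - x n⟫
        + L * (α (n+1))^2 / (2 * A (n+1)) * (N (x (n+1) - x n))^2 := by
      have h2 := mul_le_mul_of_nonneg_left hd hAtpos.le
      calc A (n+1) * f (xb (n+1))
          ≤ A (n+1) * (f (xtil (n+1)) + α (n+1) / A (n+1) * ⟪y (n+1), x (n+1) - x n⟫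
            + L / 2 * (α (n+1) / A (n+1) * N (x (n+1) - x n)) ^ 2) := h2
        _ = A (n+1) * f (xtil (n+1)) + α (n+1) * ⟪y (n+1), x (n+1) - x n⟫
            + L * (α (n+1))^2 / (2 * A (n+1)) * (N (x (n+1) - x n))^2 := by
          field_simp
    have I2' := myConvexGrad f hconv hdiff (xtil (n+1)) (xb n)
    rw [← hy (n+1) ht1] at I2'
    have I2 := mul_le_mul_of_nonneg_left I2' (hAnn n)
    have I3' := myConvexGrad f hconv hdiff (xtil (n+1)) xstar
    rw [← hy (n+1) ht1] at I3'
    have I3 := mul_le_mul_of_nonneg_left I3' (hαnn (n+1))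
    have eZ : A (n+1) * ⟪y (n+1), xtil (n+1)⟫
        = α (n+1) * ⟪y (n+1), x n⟫ + ⟪y (n+1), S n⟫ := by
      have h3 := congrArg (fun v => ⟪y (n+1), v⟫) hAxt
      simp only [inner_add_right, real_inner_smul_right] at h3
      exact h3
    have eR : A n * ⟪y (n+1), xb n⟫ = ⟪y (n+1), S n⟫ := by
      have h3 := congrArg (fun v => ⟪y (n+1), v⟫) (hSb n)
      simp only [real_inner_smul_right] at h3
      exact h3
    have eA : A (n+1) = A n + α (n+1) := by
      rw [hAval, hAval, hαdef]
      push_cast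
      ring
    have hopt : ∀ w' ∈ X, (γ (n+1) * α (n+1)) * ⟪x (n+1), y (n+1)⟫ + V (x n) (x (n+1))
        ≤ (γ (n+1) * α (n+1)) * ⟪w', y (n+1)⟫ + V (x n) w' := by
      intro w' hw'
      have h3 := (hx (n+1) htmem).2 w' hw'
      simp only [Nat.add_sub_cancel] at h3
      rw [mul_assoc, mul_assoc]
      exact h3
    have hMD := myMD φ hφ V hV X hXconv (x (n+1)) (x n) xstar (hx (n+1) htmem).1 hxstar
      (γ (n+1) * α (n+1)) (y (n+1)) hopt
    have hγt := hγpos (n+1) htmem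
    have hγtinv : (0:ℝ) < 1 / γ (n+1) := by positivity
    have hMD2 : α (n+1) * ⟪y (n+1), x (n+1) - xstar⟫
        ≤ (1/γ (n+1)) * (a n - a (n+1)) - (1/γ (n+1)) * V (x n) (x (n+1)) := by
      have h4 := mul_le_mul_of_nonneg_left hMD hγtinv.le
      have hrw : (1/γ (n+1)) * ((γ (n+1) * α (n+1)) * ⟪y (n+1), x (n+1) - xstar⟫)
          = α (n+1) * ⟪y (n+1), x (n+1) - xstar⟫ := by
        field_simp
      calc α (n+1) * ⟪y (n+1), x (n+1) - xstar⟫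
          = (1/γ (n+1)) * ((γ (n+1) * α (n+1)) * ⟪y (n+1), x (n+1) - xstar⟫) := hrw.symm
        _ ≤ (1/γ (n+1)) * (V (x n) xstar - V (x (n+1)) xstar - V (x n) (x (n+1))) := h4
        _ = (1/γ (n+1)) * (a n - a (n+1)) - (1/γ (n+1)) * V (x n) (x (n+1)) := by
            simp only [hadef]; ring
    have hquad : L * (α (n+1))^2 / (2 * A (n+1)) * (N (x (n+1) - x n))^2
        ≤ (1/γ (n+1)) * V (x n) (x (n+1)) := by
      have hsc := hφsc (x n) (x (n+1))
      have hα2 : (α (n+1))^2 ≤ 2 * A (n+1) := by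
        rw [hαdef, hAval]
        push_cast
        nlinarith [(by positivity : (0:ℝ) ≤ (n:ℝ))]
      have h4L := hγinv_ge (n+1) htmem
      have hNsq : (0:ℝ) ≤ (N (x (n+1) - x n))^2 := sq_nonneg _
      have hc1 : L * (α (n+1))^2 / (2 * A (n+1)) ≤ L := by
        rw [div_le_iff₀ (by positivity)]
        nlinarith
      calc L * (α (n+1))^2 / (2 * A (n+1)) * (N (x (n+1) - x n))^2
          ≤ L * (N (x (n+1) - x n))^2 := mul_le_mul_of_nonneg_right hc1 hNsq
        _ ≤ (1/γ (n+1)) * ((1/2) * (N (x (n+1) - x n))^2) := by nlinarith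
        _ ≤ (1/γ (n+1)) * V (x n) (x (n+1)) := by
            apply mul_le_mul_of_nonneg_left hsc hγtinv.le
    simp only [inner_sub_right] at I1 I2 I3 hMD2
    have eF : A (n+1) * f (xtil (n+1)) = A n * f (xtil (n+1)) + α (n+1) * f (xtil (n+1)) := by
      rw [eA]; ring
    have eFs : A (n+1) * f xstar = A n * f xstar + α (n+1) * f xstar := by
      rw [eA]; ring
    have eZ2 : A (n+1) * ⟪y (n+1), xtil (n+1)⟫
        = A n * ⟪y (n+1), xtil (n+1)⟫ + α (n+1) * ⟪y (n+1), xtil (n+1)⟫ := by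
      rw [eA]; ring
    nlinarith [I1, I2, I3, eZ, eR, eF, eFs, hMD2, hquad, eZ2]
  -- induction
  have hind : ∀ n : ℕ, 1 ≤ n → n ≤ T →
      A n * (f (xb n) - f xstar) ≤ (1/γ n) * (D - a n) := by
    intro n
    induction n with
    | zero => omega
    | succ k ih =>
      intro _ hkT
      rcases Nat.eq_zero_or_pos k with rfl | hk
      · have h1 := hstep 0 hkT
        have hA0 : A 0 = 0 := by rw [hAval]; norm_num
        rw [hA0] at h1
        have ha0 : a 0 ≤ D := hD 0 (by omega)
        have ha1 : 0 ≤ a 1 := hann 1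
        have hγ1 : 0 < γ 1 := hγpos 1 (Finset.mem_Icc.2 ⟨le_refl 1, hkT⟩)
        have hγ1inv : (0:ℝ) < 1/γ 1 := by positivity
        have h2 : (1/γ 1) * (a 0 - a 1) ≤ (1/γ 1) * (D - a 1) :=
          mul_le_mul_of_nonneg_left (by linarith) hγ1inv.le
        simp only [zero_mul] at h1
        linarith
      · have hkmem : k ∈ Icc 1 T := Finset.mem_Icc.2 ⟨hk, by omega⟩
        have hk1mem : k + 1 ∈ Icc 1 T := Finset.mem_Icc.2 ⟨by omega, hkT⟩
        have ihk := ih hk (by omega)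
        have h1 := hstep k hkT
        have hγk := hγpos k hkmem
        have hγk1 := hγpos (k+1) hk1mem
        have hγle : γ (k+1) ≤ γ k := hγmono k hkmem (k+1) hk1mem (by omega)
        have hmono : 1/γ k ≤ 1/γ (k+1) := by
          apply one_div_le_one_div_of_le hγk1 hγle
        have hDk : a k ≤ D := hD k (by omega)
        have h2 : (1/γ k) * (D - a k) ≤ (1/γ (k+1)) * (D - a k) :=
          mul_le_mul_of_nonneg_right hmono (by linarith)
        linarith [h1, ihk, h2]
  -- conclude
  have hTmem : T ∈ Icc 1 T := Finset.mem_Icc.2 ⟨hT, le_refl T⟩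
  have hfinal := hind T hT (le_refl T)
  have hγT := hγpos T hTmem
  have hγTinv : (0:ℝ) < 1/γ T := by positivity
  have hinvT := hγinv_le T hTmem
  have haT : 0 ≤ a T := hann T
  have haTD : a T ≤ D := hD T (le_refl T)
  have hDnn : 0 ≤ D := le_trans haT haTD
  have h5 : (1/γ T) * (D - a T) ≤ C * L * D := by
    calc (1/γ T)*(D - a T) ≤ (1/γ T) * D :=
          mul_le_mul_of_nonneg_left (by linarith) hγTinv.le
      _ ≤ C * L * D := mul_le_mul_of_nonneg_right hinvT hDnn
  have hATpos : 0 < A T := hApos T hT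
  have hxbT : xbar = xb T := by simp only [hxbar, hxbdef, hSdef]
  have h6 : f xbar - f xstar ≤ C * L * D / A T := by
    rw [hxbT, le_div_iff₀ hATpos]
    have h8 : A T * (f (xb T) - f xstar) ≤ C * L * D := le_trans hfinal h5
    linarith [h8]
  have hT1 : (1:ℝ) ≤ (T:ℝ) := by exact_mod_cast hT
  have h7 : C * L * D / A T ≤ 2 * C * L * D / (T:ℝ)^2 := by
    have hCLD : 0 ≤ C * L * D := by positivity
    have hTpos : (0:ℝ) < (T:ℝ) := lt_of_lt_of_le one_pos hT1
    have hT1' : (0:ℝ) < (T:ℝ) + 1 := by positivity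
    have h9 : (0:ℝ) < (T:ℝ) * ((T:ℝ) + 1) / 2 := div_pos (mul_pos hTpos hT1') two_pos
    have h10 : (0:ℝ) < (T:ℝ)^2 := pow_pos hTpos 2
    rw [hAval, div_le_div_iff₀ h9 h10]
    have h11 : (T:ℝ)^2 ≤ (T:ℝ)*((T:ℝ)+1) := by nlinarith [hTpos.le]
    have h12 := mul_le_mul_of_nonneg_left h11 hCLD
    calc C * L * D * (T:ℝ)^2 ≤ C * L * D * ((T:ℝ)*((T:ℝ)+1)) := h12
      _ = 2 * C * L * D * ((T:ℝ) * ((T:ℝ) + 1) / 2) := by ring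
  linarith
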